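/- arXiv:1203.4881 — 3 statements merged into one kernel-verified Lean document; each statement's English description precedes it below -/
import Mathlib

section
/- Fix weights w_1 ≥ w_2 ≥ ... ≥ w_n > 0. The Pareto front of the bi-objective problem (WORDER, C), where WORDER is to be maximized and the complexity C minimized, has exactly n+1 elements: the objective vectors (∑_{k=1}^{j} w_k, 2j-1) for j = 1,...,n together with (0, 0). -/
open Finset

/-- A GP syntax tree over `n` variables: the only function symbol is the binary join
`J`; leaves are labelled by literals `(i, b)` where `b = true` stands for `x_i` and
`b = false` for the complement `x̄_i`. -/
inductive GPTree (n : ℕ) : Type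
  | leaf (v : Fin n × Bool) : GPTree n
  | node (l r : GPTree n) : GPTree n

namespace GPTree

variable {n : ℕ}

/-- The inorder list of leaf labels. -/
def leafList : GPTree n → List (Fin n × Bool)
  | leaf v => [v]
  | node l r => l.leafList ++ r.leafList

/-- Total number of nodes. -/
def size : GPTree n → ℕ
  | leaf _ => 1
  | node l r => l.size + r.size + 1

/-- Number of leaves. -/
def numLeaves (t : GPTree n) : ℕ := t.leafList.length

end GPTree

/-- A solution is either the empty tree (`none`) or a nonempty syntax tree. -/
abbrev GPSol (n : ℕ) := Option (GPTree n)

namespace GPSol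

variable {n : ℕ}

/-- The complexity `C`: the number of nodes (the empty tree has complexity 0). -/
def complexity : GPSol n → ℕ
  | none => 0
  | some t => t.size

/-- The inorder leaf list. -/
def leaves : GPSol n → List (Fin n × Bool)
  | none => []
  | some t => t.leafList

/-- Number of leaves. -/
def numLeaves (X : GPSol n) : ℕ := X.leaves.length

/-- The set `S` of expressed variables for (W)ORDER: `x_i ∈ S` iff the first
occurrence of a literal of variable `i` in the inorder leaf list is positive. -/
def orderSet (X : GPSol n) : Finset (Fin n) :=
  Finset.univ.filter fun i => X.leaves.find? (fun p => p.1 == i) = some (i, true)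

/-- `WORDER(X) = ∑_{x_i ∈ S} w_i`. -/
def worder (w : Fin n → ℝ) (X : GPSol n) : ℝ := ∑ i ∈ orderSet X, w i

/-- `ORDER(X)`: the number of expressed variables (all weights equal to 1). -/
def order (X : GPSol n) : ℕ := (orderSet X).card

/-- The set `S` of expressed variables for (W)MAJORITY: `x_i ∈ S` iff `x_i` occurs in
the leaf list and at least as often as `x̄_i`. -/
def majoritySet (X : GPSol n) : Finset (Fin n) :=
  Finset.univ.filter fun i =>
    1 ≤ X.leaves.count (i, true) ∧ X.leaves.count (i, false) ≤ X.leaves.count (i, true)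

/-- `WMAJORITY(X) = ∑_{x_i ∈ S} w_i`. -/
def wmajority (w : Fin n → ℝ) (X : GPSol n) : ℝ := ∑ i ∈ majoritySet X, w i

end GPSol

/-- The set of achievable objective vectors `(WORDER(X), C(X))`. -/
def achievable {n : ℕ} (w : Fin n → ℝ) : Set (ℝ × ℕ) :=
  {v | ∃ X : GPSol n, v = (GPSol.worder w X, GPSol.complexity X)}

/-- The Pareto front of the bi-objective problem `(WORDER, C)` (`WORDER` maximized,
`C` minimized): the achievable vectors not strictly dominated by any achievable
vector. -/
def paretoFront {n : ℕ} (w : Fin n → ℝ) : Set (ℝ × ℕ) :=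
  {v ∈ achievable w |
    ¬ ∃ u ∈ achievable w, (v.1 ≤ u.1 ∧ u.2 ≤ v.2) ∧ (v.1 < u.1 ∨ u.2 < v.2)}

section Aux

variable {n : ℕ}

/-- Sum of the `j` largest weights. -/
noncomputable def Fval (w : Fin n → ℝ) (j : ℕ) : ℝ :=
  ∑ k ∈ Finset.univ.filter (fun k : Fin n => (k : ℕ) < j), w k

lemma GPTree.size_succ (t : GPTree n) : t.size + 1 = 2 * t.leafList.length := by
  induction t with
  | leaf v => simp [GPTree.size, GPTree.leafList]
  | node l r ihl ihr =>
    simp only [GPTree.size, GPTree.leafList, List.length_append]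
    omega

lemma GPTree.leafList_pos (t : GPTree n) : 1 ≤ t.leafList.length := by
  induction t with
  | leaf v => simp [GPTree.leafList]
  | node l r ihl ihr => simp [GPTree.leafList]; omega

lemma Fval_nonneg (w : Fin n → ℝ) (hpos : ∀ i, 0 < w i) (j : ℕ) : 0 ≤ Fval w j :=
  Finset.sum_nonneg fun i _ => (hpos i).le

lemma Fval_mono (w : Fin n → ℝ) (hpos : ∀ i, 0 < w i) {a b : ℕ} (h : a ≤ b) :
    Fval w a ≤ Fval w b := by
  apply Finset.sum_le_sum_of_subset_of_nonneg
  · intro x hx; simp only [Finset.mem_filter, Finset.mem_univ, true_and] at hx ⊢; omega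
  · intro i _ _; exact (hpos i).le

lemma Fval_succ (w : Fin n → ℝ) {j : ℕ} (hj : j < n) :
    Fval w (j + 1) = Fval w j + w ⟨j, hj⟩ := by
  have hins : Finset.univ.filter (fun k : Fin n => (k : ℕ) < j + 1) =
      insert ⟨j, hj⟩ (Finset.univ.filter (fun k : Fin n => (k : ℕ) < j)) := by
    ext x
    simp only [Finset.mem_filter, Finset.mem_univ, true_and, Finset.mem_insert, Fin.ext_iff]
    omega
  rw [Fval, hins, Finset.sum_insert (by simp)]
  rw [Fval]; ring

lemma Fval_lt_succ (w : Fin n → ℝ) (hpos : ∀ i, 0 < w i) {j : ℕ} (hj : j < n) :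
    Fval w j < Fval w (j + 1) := by
  rw [Fval_succ w hj]
  linarith [hpos ⟨j, hj⟩]

lemma Fval_pos (w : Fin n → ℝ) (hpos : ∀ i, 0 < w i) {j : ℕ} (hj1 : 1 ≤ j) (hj2 : j ≤ n) :
    0 < Fval w j := by
  have h0 : (0 : ℕ) < n := lt_of_lt_of_le hj1 hj2
  calc (0 : ℝ) = Fval w 0 := by simp [Fval]
    _ < Fval w 1 := Fval_lt_succ w hpos h0
    _ ≤ Fval w j := Fval_mono w hpos hj1

/-- Key sortedness lemma: any set of at most `j` weights sums to at most the `j` largest. -/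
lemma sum_le_Fval (w : Fin n → ℝ) (hsort : ∀ i j : Fin n, i ≤ j → w j ≤ w i)
    (hpos : ∀ i, 0 < w i) :
    ∀ (j : ℕ) (S : Finset (Fin n)), S.card ≤ j → ∑ i ∈ S, w i ≤ Fval w j := by
  intro j
  induction j with
  | zero =>
    intro S hS
    have : S = ∅ := Finset.card_eq_zero.mp (Nat.le_zero.mp hS)
    simp [this, Fval]
  | succ j ih =>
    intro S hS
    rcases Nat.lt_or_ge S.card (j + 1) with h | h
    · exact (ih S (by omega)).trans (Fval_mono w hpos (Nat.le_succ j))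
    · have hcard : S.card = j + 1 := le_antisymm hS h
      have hne : S.Nonempty := Finset.card_pos.mp (by omega)
      set M := S.max' hne with hMdef
      have hMS : M ∈ S := S.max'_mem hne
      have hsub : S ⊆ Finset.Iic M := fun x hx => Finset.mem_Iic.mpr (S.le_max' x hx)
      have hcard2 : S.card ≤ (M : ℕ) + 1 := by
        have := Finset.card_le_card hsub
        rwa [Fin.card_Iic] at this
      have hjM : j ≤ (M : ℕ) := by omega
      have hjn : j < n := lt_of_le_of_lt hjM M.isLt
      have hsplit : ∑ i ∈ S.erase M, w i + w M = ∑ i ∈ S, w i :=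
        Finset.sum_erase_add S w hMS
      have h1 : ∑ i ∈ S.erase M, w i ≤ Fval w j := by
        apply ih
        rw [Finset.card_erase_of_mem hMS]; omega
      have h2 : w M ≤ w ⟨j, hjn⟩ := hsort ⟨j, hjn⟩ M (by simpa [Fin.le_def] using hjM)
      rw [Fval_succ w hjn]
      linarith

lemma card_orderSet_le (X : GPSol n) : (GPSol.orderSet X).card ≤ X.leaves.length := by
  classical
  have hsub : (GPSol.orderSet X).image (fun i => (i, true)) ⊆ X.leaves.toFinset := by
    intro p hp
    simp only [Finset.mem_image] at hp
    obtain ⟨i, hi, rfl⟩ := hp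
    simp only [GPSol.orderSet, Finset.mem_filter, Finset.mem_univ, true_and] at hi
    exact List.mem_toFinset.mpr (List.mem_of_find?_eq_some hi)
  calc (GPSol.orderSet X).card
      = ((GPSol.orderSet X).image (fun i => (i, true))).card :=
        (Finset.card_image_of_injective _ (fun a b h => by simpa using h)).symm
    _ ≤ X.leaves.toFinset.card := Finset.card_le_card hsub
    _ ≤ X.leaves.length := List.toFinset_card_le _

lemma orderSet_of_leaves (X : GPSol n) (j : ℕ)
    (h : ∀ p : Fin n × Bool, p ∈ X.leaves ↔ (p.2 = true ∧ (p.1 : ℕ) < j)) :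
    GPSol.orderSet X = Finset.univ.filter fun i : Fin n => (i : ℕ) < j := by
  ext i
  simp only [GPSol.orderSet, Finset.mem_filter, Finset.mem_univ, true_and]
  constructor
  · intro hfind
    have hmem := List.mem_of_find?_eq_some hfind
    exact ((h _).mp hmem).2
  · intro hij
    have hmem : ((i, true) : Fin n × Bool) ∈ X.leaves := (h _).mpr ⟨rfl, hij⟩
    have hsome : (X.leaves.find? (fun p => p.1 == i)).isSome := by
      rw [List.find?_isSome]
      exact ⟨(i, true), hmem, by simp⟩
    obtain ⟨q, hq⟩ := Option.isSome_iff_exists.mp hsome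
    have hqmem := List.mem_of_find?_eq_some hq
    have hq1 : q.1 = i := by simpa using List.find?_some hq
    have hq2 : q.2 = true := ((h _).mp hqmem).1
    rw [hq]
    congr 1
    exact Prod.ext hq1 hq2

lemma achieve_list (L : List (Fin n × Bool)) :
    ∃ X : GPSol n, X.leaves = L ∧ X.complexity = 2 * L.length - 1 := by
  classical
  induction L with
  | nil => exact ⟨none, rfl, rfl⟩
  | cons a l ih =>
    obtain ⟨X, hX1, hX2⟩ := ih
    cases X with
    | none =>
      have hl : l = [] := by simpa [GPSol.leaves] using hX1.symm
      refine ⟨some (GPTree.leaf a), ?_, ?_⟩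
      · simp [GPSol.leaves, GPTree.leafList, hl]
      · simp [GPSol.complexity, GPTree.size, hl]
    | some t =>
      refine ⟨some (GPTree.node (GPTree.leaf a) t), ?_, ?_⟩
      · simp only [GPSol.leaves, GPTree.leafList] at hX1 ⊢
        simp [hX1]
      · have hs := GPTree.size_succ t
        have hlen : t.leafList.length = l.length := by
          simpa [GPSol.leaves] using congrArg List.length hX1
        have hp := GPTree.leafList_pos t
        simp only [GPSol.complexity, GPTree.size] at hX2 ⊢
        simp only [GPTree.size, List.length_cons]
        omega

lemma exists_sol (w : Fin n → ℝ) (j : ℕ) (hj : j ≤ n) :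
    ∃ X : GPSol n, GPSol.worder w X = Fval w j ∧ GPSol.complexity X = 2 * j - 1 := by
  classical
  set L : List (Fin n × Bool) :=
    ((List.finRange n).filter (fun k : Fin n => decide ((k : ℕ) < j))).map (fun k => (k, true)) with hL
  have hmem : ∀ p : Fin n × Bool, p ∈ L ↔ (p.2 = true ∧ (p.1 : ℕ) < j) := by
    intro p
    simp only [hL, List.mem_map, List.mem_filter, List.mem_finRange, true_and,
      decide_eq_true_eq]
    constructor
    · rintro ⟨k, hk, rfl⟩; exact ⟨rfl, hk⟩
    · rintro ⟨h2, h1⟩; exact ⟨p.1, h1, by rw [← h2]⟩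
  have hnodup : ((List.finRange n).filter (fun k : Fin n => decide ((k : ℕ) < j))).Nodup :=
    (List.nodup_finRange n).filter _
  have hlen : L.length = j := by
    have h1 : L.length = ((List.finRange n).filter (fun k : Fin n => decide ((k : ℕ) < j))).length := by
      simp [hL]
    have h2 : ((List.finRange n).filter (fun k : Fin n => decide ((k : ℕ) < j))).toFinset =
        Finset.univ.filter (fun k : Fin n => (k : ℕ) < j) := by
      ext k; simp
    have h3 : (Finset.univ.filter (fun k : Fin n => (k : ℕ) < j)) =
        Finset.map ⟨Fin.castLE hj, Fin.castLE_injective hj⟩ Finset.univ := by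
      ext x
      simp only [Finset.mem_filter, Finset.mem_univ, true_and, Finset.mem_map,
        Function.Embedding.coeFn_mk]
      constructor
      · intro hx
        refine ⟨⟨(x : ℕ), hx⟩, ?_⟩
        first
        | exact ⟨Finset.mem_univ _, by ext; simp⟩
        | (ext; simp)
      · rintro ⟨y, hy⟩
        first
        | (obtain ⟨-, rfl⟩ := hy; exact y.isLt)
        | (obtain rfl := hy; exact y.isLt)
    rw [h1, ← List.toFinset_card_of_nodup hnodup, h2, h3, Finset.card_map, Finset.card_univ,
      Fintype.card_fin]
  obtain ⟨X, hX1, hX2⟩ := achieve_list L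
  refine ⟨X, ?_, by rw [hX2, hlen]⟩
  have hOS := orderSet_of_leaves X j (by rw [hX1]; exact hmem)
  rw [GPSol.worder, hOS, Fval]

end Aux

/-- for weights `w_1 ≥ w_2 ≥ ... ≥ w_n > 0`, the Pareto front of
`(WORDER, C)` consists exactly of the `n+1` objective vectors
`(∑_{k=1}^{j} w_k, 2j - 1)` for `j = 1, ..., n` together with `(0, 0)`
(which is the vector for `j = 0`, since `2·0 - 1 = 0` as a truncated natural
number subtraction), and it has exactly `n + 1` elements. -/
theorem stmt6 {n : ℕ} (w : Fin n → ℝ)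
    (hsort : ∀ i j : Fin n, i ≤ j → w j ≤ w i) (hpos : ∀ i, 0 < w i) :
    paretoFront w =
      Set.range (fun j : Fin (n + 1) =>
        ((∑ k ∈ Finset.univ.filter (fun k : Fin n => (k : ℕ) < (j : ℕ)), w k,
          2 * (j : ℕ) - 1) : ℝ × ℕ)) ∧
    (paretoFront w).ncard = n + 1 := by
  classical
  have hfun : (fun j : Fin (n + 1) =>
      ((∑ k ∈ Finset.univ.filter (fun k : Fin n => (k : ℕ) < (j : ℕ)), w k,
        2 * (j : ℕ) - 1) : ℝ × ℕ)) =
      (fun j : Fin (n + 1) => ((Fval w (j : ℕ), 2 * (j : ℕ) - 1) : ℝ × ℕ)) := rfl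
  have key : paretoFront w =
      Set.range (fun j : Fin (n + 1) => ((Fval w (j : ℕ), 2 * (j : ℕ) - 1) : ℝ × ℕ)) := by
    ext v
    constructor
    · rintro ⟨⟨X, rfl⟩, hnd⟩
      have hjn : (GPSol.orderSet X).card ≤ n := by
        have := Finset.card_le_univ (GPSol.orderSet X)
        simpa using this
      set j := (GPSol.orderSet X).card with hjdef
      have hle : GPSol.worder w X ≤ Fval w j :=
        sum_le_Fval w hsort hpos j _ le_rfl
      have hcge : 2 * j - 1 ≤ GPSol.complexity X := by
        cases X with
        | none =>
          have : GPSol.orderSet (none : GPSol n) = ∅ := by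
            ext i; simp [GPSol.orderSet, GPSol.leaves]
          simp [hjdef, this, GPSol.complexity]
        | some t =>
          have h1 := card_orderSet_le (some t : GPSol n)
          have h2 := GPTree.size_succ t
          simp only [GPSol.leaves] at h1
          simp only [GPSol.complexity]
          omega
      obtain ⟨Y, hY1, hY2⟩ := exists_sol w j hjn
      have hach : (Fval w j, 2 * j - 1) ∈ achievable w := ⟨Y, by rw [hY1, hY2]⟩
      have heq : GPSol.worder w X = Fval w j ∧ GPSol.complexity X = 2 * j - 1 := by
        by_contra hc
        by_cases he : GPSol.worder w X = Fval w j
        · exact hnd ⟨_, hach, ⟨hle, hcge⟩,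
            Or.inr (lt_of_le_of_ne hcge (fun h => hc ⟨he, h.symm⟩))⟩
        · exact hnd ⟨_, hach, ⟨hle, hcge⟩, Or.inl (lt_of_le_of_ne hle he)⟩
      exact ⟨⟨j, Nat.lt_succ_of_le hjn⟩, by simp [heq.1, heq.2]⟩
    · rintro ⟨j, rfl⟩
      have hjn : (j : ℕ) ≤ n := Nat.lt_succ_iff.mp j.isLt
      obtain ⟨Y, hY1, hY2⟩ := exists_sol w (j : ℕ) hjn
      refine ⟨⟨Y, by rw [hY1, hY2]⟩, ?_⟩
      rintro ⟨u, ⟨Z, rfl⟩, ⟨hu1, hu2⟩, hstrict⟩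
      simp only at hu1 hu2 hstrict
      have hcard := card_orderSet_le Z
      rcases hstrict with hlt | hlt
      · -- Fval w j < worder Z, but complexity Z ≤ 2j-1 forces worder Z ≤ Fval w j
        have hcle : (GPSol.orderSet Z).card ≤ (j : ℕ) := by
          cases Z with
          | none =>
            have : GPSol.orderSet (none : GPSol n) = ∅ := by
              ext i; simp [GPSol.orderSet, GPSol.leaves]
            simp [this]
          | some t =>
            have h2 := GPTree.size_succ t
            have h3 := GPTree.leafList_pos t
            simp only [GPSol.complexity] at hu2
            simp only [GPSol.leaves] at hcard
            omega
        have := sum_le_Fval w hsort hpos (j : ℕ) _ hcle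
        exact absurd hlt (not_lt.mpr this)
      · -- complexity Z < 2j-1
        have hj1 : 1 ≤ (j : ℕ) := by omega
        obtain ⟨j', hj'⟩ : ∃ j', (j : ℕ) = j' + 1 := ⟨(j : ℕ) - 1, by omega⟩
        have hj'n : j' < n := by omega
        cases Z with
        | none =>
          have hZ0 : GPSol.worder w (none : GPSol n) = 0 := by
            have : GPSol.orderSet (none : GPSol n) = ∅ := by
              ext i; simp [GPSol.orderSet, GPSol.leaves]
            simp [GPSol.worder, this]
          have hFpos : 0 < Fval w (j : ℕ) := Fval_pos w hpos hj1 hjn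
          rw [hZ0] at hu1
          linarith
        | some t =>
          have h2 := GPTree.size_succ t
          have h3 := GPTree.leafList_pos t
          simp only [GPSol.complexity] at hlt
          simp only [GPSol.leaves] at hcard
          have hcle : (GPSol.orderSet (some t : GPSol n)).card ≤ j' := by
            omega
          have hw1 : GPSol.worder w (some t) ≤ Fval w j' :=
            sum_le_Fval w hsort hpos j' _ hcle
          have hw2 : Fval w j' < Fval w (j' + 1) := Fval_lt_succ w hpos hj'n
          rw [hj'] at hu1
          linarith
  constructor
  · rw [hfun]; exact key
  · have hinj : Function.Injective
        (fun j : Fin (n + 1) => ((Fval w (j : ℕ), 2 * (j : ℕ) - 1) : ℝ × ℕ)) := by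
      intro a b hab
      have h2 := congrArg Prod.snd hab
      simp only at h2
      have := a.isLt
      have := b.isLt
      exact Fin.ext (by omega)
    rw [key]
    have hrange : Set.range (fun j : Fin (n + 1) => ((Fval w (j : ℕ), 2 * (j : ℕ) - 1) : ℝ × ℕ))
        = ↑(Finset.univ.image
            (fun j : Fin (n + 1) => ((Fval w (j : ℕ), 2 * (j : ℕ) - 1) : ℝ × ℕ))) := by
      simp
    rw [hrange, Set.ncard_coe_finset, Finset.card_image_of_injective _ hinj,
      Finset.card_univ, Fintype.card_fin]
end

section
/- Consider a Markov process on states (s, k) with s ≥ k ≥ 0, where s is the number of leaves of the current tree and k the number of expressed variables, evolving under single HVL-Prime mutations with the MO-WORDER acceptance rule (accept iff fitness strictly increases, or fitness equal and complexity does not increase). Then the quantity s - k never increases: every accepted step either leaves s - k unchanged or decreases it. -/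
open Finset

/-- `Substitute t t'`: `t'` is obtained from `t` by replacing one leaf label. -/
inductive Substitute {n : ℕ} : GPTree n → GPTree n → Prop
  | leaf (a b : Fin n × Bool) : Substitute (.leaf a) (.leaf b)
  | left {l l' r : GPTree n} : Substitute l l' → Substitute (.node l r) (.node l' r)
  | right {l r r' : GPTree n} : Substitute r r' → Substitute (.node l r) (.node l r')

/-- `InsertLeaf t t'`: `t'` is obtained from `t` by replacing some subtree `v` by a join
node whose children are `v` and a new leaf (in either order). -/
inductive InsertLeaf {n : ℕ} : GPTree n → GPTree n → Prop
  | hereL (t : GPTree n) (a : Fin n × Bool) : InsertLeaf t (.node (.leaf a) t)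
  | hereR (t : GPTree n) (a : Fin n × Bool) : InsertLeaf t (.node t (.leaf a))
  | left {l l' r : GPTree n} : InsertLeaf l l' → InsertLeaf (.node l r) (.node l' r)
  | right {l r r' : GPTree n} : InsertLeaf r r' → InsertLeaf (.node l r) (.node l r')

/-- One application of the HVL-Prime operator on solutions (substitute, insert or
delete; deletion is the inverse of insertion, and the empty tree is handled as the
special case). -/
inductive HVLStep {n : ℕ} : GPSol n → GPSol n → Prop
  | sub {X Y : GPTree n} : Substitute X Y → HVLStep (some X) (some Y)
  | ins {X Y : GPTree n} : InsertLeaf X Y → HVLStep (some X) (some Y)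
  | insEmpty (a : Fin n × Bool) : HVLStep none (some (.leaf a))
  | del {X Y : GPTree n} : InsertLeaf Y X → HVLStep (some X) (some Y)
  | delToEmpty (a : Fin n × Bool) : HVLStep (some (.leaf a)) none

section Aux

variable {n : ℕ}

lemma find?_middle (L1 L2 : List (Fin n × Bool)) (a : Fin n × Bool) (m : Fin n)
    (hm : m ≠ a.1) :
    (L1 ++ a :: L2).find? (fun p => p.1 == m)
      = (L1 ++ L2).find? (fun p => p.1 == m) := by
  induction L1 with
  | nil =>
    simp only [List.nil_append, List.find?_cons]
    have : (a.1 == m) = false := by simpa using fun h => hm h.symm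
    simp [this]
  | cons x L ih =>
    simp only [List.cons_append, List.find?_cons]
    cases h : (x.1 == m) <;> simp [h, ih]

lemma Substitute.leafList_eq {t t' : GPTree n} (h : Substitute t t') :
    ∃ L1 L2 a b, t.leafList = L1 ++ a :: L2 ∧ t'.leafList = L1 ++ b :: L2 := by
  induction h with
  | leaf a b => exact ⟨[], [], a, b, rfl, rfl⟩
  | @left l l' r _ ih =>
    obtain ⟨L1, L2, a, b, h1, h2⟩ := ih
    exact ⟨L1, L2 ++ r.leafList, a, b, by simp [GPTree.leafList, h1],
      by simp [GPTree.leafList, h2]⟩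
  | @right l r r' _ ih =>
    obtain ⟨L1, L2, a, b, h1, h2⟩ := ih
    exact ⟨l.leafList ++ L1, L2, a, b, by simp [GPTree.leafList, h1],
      by simp [GPTree.leafList, h2]⟩

lemma InsertLeaf.leafList_eq {t t' : GPTree n} (h : InsertLeaf t t') :
    ∃ L1 L2 a, t.leafList = L1 ++ L2 ∧ t'.leafList = L1 ++ a :: L2 := by
  induction h with
  | hereL t a => exact ⟨[], t.leafList, a, rfl, rfl⟩
  | hereR t a => exact ⟨t.leafList, [], a, by simp, by simp [GPTree.leafList]⟩
  | @left l l' r _ ih =>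
    obtain ⟨L1, L2, a, h1, h2⟩ := ih
    exact ⟨L1, L2 ++ r.leafList, a, by simp [GPTree.leafList, h1],
      by simp [GPTree.leafList, h2]⟩
  | @right l r r' _ ih =>
    obtain ⟨L1, L2, a, h1, h2⟩ := ih
    exact ⟨l.leafList ++ L1, L2, a, by simp [GPTree.leafList, h1],
      by simp [GPTree.leafList, h2]⟩

lemma InsertLeaf.size_eq {t t' : GPTree n} (h : InsertLeaf t t') :
    t'.size = t.size + 2 := by
  induction h <;> simp [GPTree.size] at * <;> omega

lemma mem_orderSet {X : GPSol n} {m : Fin n} :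
    m ∈ GPSol.orderSet X ↔ X.leaves.find? (fun p => p.1 == m) = some (m, true) := by
  simp [GPSol.orderSet]

lemma key_card_le (w : Fin n → ℝ) (hpos : ∀ i, 0 < w i) (A B V : Finset (Fin n))
    (hV : V.card ≤ 2) (hdiff : ∀ m ∉ V, (m ∈ A ↔ m ∈ B))
    (hw : ∑ i ∈ A, w i ≤ ∑ i ∈ B, w i) : A.card ≤ B.card := by
  by_contra hcon
  push_neg at hcon
  have hAV : A \ V = B \ V := by
    ext m
    simp only [Finset.mem_sdiff]
    exact ⟨fun ⟨h1, h2⟩ => ⟨(hdiff m h2).mp h1, h2⟩,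
      fun ⟨h1, h2⟩ => ⟨(hdiff m h2).mpr h1, h2⟩⟩
  have hcardA : A.card = (A \ V).card + (A ∩ V).card := by
    rw [Finset.card_sdiff_add_card_inter]
  have hcardB : B.card = (B \ V).card + (B ∩ V).card := by
    rw [Finset.card_sdiff_add_card_inter]
  have hAVcard : (A \ V).card = (B \ V).card := by rw [hAV]
  have hlt : (B ∩ V).card < (A ∩ V).card := by omega
  have hss : B ∩ V ⊂ A ∩ V := by
    rcases Nat.eq_zero_or_pos (B ∩ V).card with h0 | h0
    · rw [Finset.card_eq_zero] at h0
      rw [h0]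
      exact Finset.empty_ssubset.mpr (Finset.card_pos.mp (by omega))
    · have hAVeq : A ∩ V = V := Finset.eq_of_subset_of_card_le
        Finset.inter_subset_right (by omega)
      have hsub : B ∩ V ⊆ A ∩ V := by
        rw [hAVeq]; exact Finset.inter_subset_right
      exact Finset.ssubset_iff_subset_ne.mpr
        ⟨hsub, fun h => by rw [h] at hlt; exact lt_irrefl _ hlt⟩
  have hsum : ∑ i ∈ B ∩ V, w i < ∑ i ∈ A ∩ V, w i := by
    obtain ⟨x, hxA, hxB⟩ := Finset.exists_of_ssubset hss
    exact Finset.sum_lt_sum_of_subset hss.subset hxA hxB (hpos x)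
      (fun j _ _ => (hpos j).le)
  have hsA : ∑ i ∈ A ∩ V, w i + ∑ i ∈ A \ V, w i = ∑ i ∈ A, w i :=
    Finset.sum_inter_add_sum_sdiff A V w
  have hsB : ∑ i ∈ B ∩ V, w i + ∑ i ∈ B \ V, w i = ∑ i ∈ B, w i :=
    Finset.sum_inter_add_sum_sdiff B V w
  rw [hAV] at hsA
  linarith

lemma key_card_lt (w : Fin n → ℝ) (hpos : ∀ i, 0 < w i) (A B : Finset (Fin n))
    (i : Fin n) (hdiff : ∀ m, m ≠ i → (m ∈ A ↔ m ∈ B))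
    (hw : ∑ j ∈ A, w j < ∑ j ∈ B, w j) : A.card + 1 ≤ B.card := by
  by_cases hiA : i ∈ A <;> by_cases hiB : i ∈ B
  · have : A = B := Finset.ext fun m => by
      by_cases hm : m = i
      · subst hm; simp [hiA, hiB]
      · exact hdiff m hm
    rw [this] at hw; exact absurd hw (lt_irrefl _)
  · exfalso
    have hBA : B ⊆ A := fun m hm => by
      by_cases hm' : m = i
      · exact absurd (hm' ▸ hm) hiB
      · exact (hdiff m hm').mpr hm
    have := Finset.sum_le_sum_of_subset_of_nonneg hBA (fun j _ _ => (hpos j).le)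
    linarith
  · have : B = insert i A := Finset.ext fun m => by
      by_cases hm : m = i
      · subst hm; simp [hiB]
      · simp [Finset.mem_insert, hm, (hdiff m hm).symm]
    rw [this, Finset.card_insert_of_notMem hiA]
  · have : A = B := Finset.ext fun m => by
      by_cases hm : m = i
      · subst hm; simp [hiA, hiB]
      · exact hdiff m hm
    rw [this] at hw; exact absurd hw (lt_irrefl _)

lemma key_card_del (A B : Finset (Fin n)) (i : Fin n)
    (hdiff : ∀ m, m ≠ i → (m ∈ A ↔ m ∈ B)) : A.card ≤ B.card + 1 := by
  have hsub : A ⊆ insert i B := fun m hm => by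
    by_cases h : m = i
    · simp [h]
    · exact Finset.mem_insert_of_mem ((hdiff m h).mp hm)
  calc A.card ≤ (insert i B).card := Finset.card_le_card hsub
    _ ≤ B.card + 1 := Finset.card_insert_le _ _

end Aux

/-- under single HVL-Prime mutations with the MO-WORDER acceptance rule
(accept iff the fitness strictly increases, or the fitness is equal and the
complexity does not increase), the difference `s - k` between the number of leaves
`s` and the number of expressed variables `k` never increases: every accepted step
leaves `s - k` unchanged or decreases it. -/
theorem stmt9 {n : ℕ} (w : Fin n → ℝ) (hpos : ∀ i, 0 < w i)
    (X Y : GPSol n) (hstep : HVLStep X Y)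
    (hacc : GPSol.worder w X < GPSol.worder w Y ∨
      (GPSol.worder w Y = GPSol.worder w X ∧
        GPSol.complexity Y ≤ GPSol.complexity X)) :
    (GPSol.numLeaves Y : ℤ) - GPSol.order Y
      ≤ (GPSol.numLeaves X : ℤ) - GPSol.order X := by
  cases hstep with
  | @sub t t' hsub =>
    obtain ⟨L1, L2, a, b, h1, h2⟩ := hsub.leafList_eq
    have hlen : GPSol.numLeaves (some t') = GPSol.numLeaves (some t) := by
      simp [GPSol.numLeaves, GPSol.leaves, h1, h2]
    have hw : GPSol.worder w (some t) ≤ GPSol.worder w (some t') := by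
      rcases hacc with h | ⟨h, _⟩
      · exact h.le
      · exact h.ge
    have hdiff : ∀ m ∉ ({a.1, b.1} : Finset (Fin n)),
        (m ∈ GPSol.orderSet (some t) ↔ m ∈ GPSol.orderSet (some t')) := by
      intro m hm
      simp only [Finset.mem_insert, Finset.mem_singleton, not_or] at hm
      rw [mem_orderSet, mem_orderSet]
      show (GPTree.leafList t).find? _ = _ ↔ (GPTree.leafList t').find? _ = _
      rw [h1, h2, find?_middle L1 L2 a m hm.1, find?_middle L1 L2 b m hm.2]
    have hcard := key_card_le w hpos _ _ _
      (le_trans (Finset.card_insert_le _ _) (by simp)) hdiff hw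
    have : GPSol.order (some t) ≤ GPSol.order (some t') := hcard
    omega
  | @ins t t' hins =>
    obtain ⟨L1, L2, a, h1, h2⟩ := hins.leafList_eq
    have hsz := hins.size_eq
    have hw : GPSol.worder w (some t) < GPSol.worder w (some t') := by
      rcases hacc with h | ⟨_, h⟩
      · exact h
      · exfalso
        simp only [GPSol.complexity] at h
        omega
    have hdiff : ∀ m, m ≠ a.1 →
        (m ∈ GPSol.orderSet (some t) ↔ m ∈ GPSol.orderSet (some t')) := by
      intro m hm
      rw [mem_orderSet, mem_orderSet]
      show (GPTree.leafList t).find? _ = _ ↔ (GPTree.leafList t').find? _ = _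
      rw [h1, h2, find?_middle L1 L2 a m hm]
    have hcard := key_card_lt w hpos _ _ a.1 hdiff hw
    have hlen : GPSol.numLeaves (some t') = GPSol.numLeaves (some t) + 1 := by
      simp [GPSol.numLeaves, GPSol.leaves, h1, h2]; omega
    have h1' : GPSol.order (some t) + 1 ≤ GPSol.order (some t') := hcard
    omega
  | insEmpty a =>
    have hwX : GPSol.worder w none = 0 := by
      simp [GPSol.worder, GPSol.orderSet, GPSol.leaves]
    have hw : 0 < GPSol.worder w (some (.leaf a)) := by
      rcases hacc with h | ⟨_, h⟩
      · rwa [hwX] at h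
      · exfalso
        simp [GPSol.complexity, GPTree.size] at h
    have hne : GPSol.orderSet (some (GPTree.leaf a)) ≠ ∅ := by
      intro h
      rw [GPSol.worder, h, Finset.sum_empty] at hw
      exact lt_irrefl _ hw
    have hcard : 1 ≤ GPSol.order (some (GPTree.leaf a)) :=
      Finset.card_pos.mpr (Finset.nonempty_of_ne_empty hne)
    have h0 : GPSol.order (none : GPSol n) = 0 := by
      simp [GPSol.order, GPSol.orderSet, GPSol.leaves]
    have hlX : GPSol.numLeaves (none : GPSol n) = 0 := by
      simp [GPSol.numLeaves, GPSol.leaves]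
    have hlY : GPSol.numLeaves (some (GPTree.leaf a)) = 1 := by
      simp [GPSol.numLeaves, GPSol.leaves, GPTree.leafList]
    omega
  | @del t t' hins =>
    obtain ⟨L1, L2, a, h1, h2⟩ := hins.leafList_eq
    have hdiff : ∀ m, m ≠ a.1 →
        (m ∈ GPSol.orderSet (some t) ↔ m ∈ GPSol.orderSet (some t')) := by
      intro m hm
      rw [mem_orderSet, mem_orderSet]
      show (GPTree.leafList t).find? _ = _ ↔ (GPTree.leafList t').find? _ = _
      rw [h1, h2, find?_middle L1 L2 a m hm]
    have hcard := key_card_del (GPSol.orderSet (some t)) (GPSol.orderSet (some t'))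
      a.1 hdiff
    have hlen : GPSol.numLeaves (some t) = GPSol.numLeaves (some t') + 1 := by
      simp [GPSol.numLeaves, GPSol.leaves, h1, h2]; omega
    have h1' : GPSol.order (some t) ≤ GPSol.order (some t') + 1 := hcard
    omega
  | delToEmpty a =>
    have hsub : GPSol.orderSet (some (GPTree.leaf a)) ⊆ {a.1} := by
      intro m hm
      rw [mem_orderSet] at hm
      show m ∈ ({a.1} : Finset (Fin n))
      simp only [GPSol.leaves, GPTree.leafList, List.find?_cons] at hm
      by_cases h : a.1 = m
      · simp [h]
      · have : (a.1 == m) = false := by simpa using h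
        rw [this] at hm
        simp at hm
    have hcard : GPSol.order (some (GPTree.leaf a)) ≤ 1 := by
      calc (GPSol.orderSet (some (GPTree.leaf a))).card
          ≤ ({a.1} : Finset (Fin n)).card := Finset.card_le_card hsub
        _ = 1 := Finset.card_singleton _
    have h0 : GPSol.order (none : GPSol n) = 0 := by
      simp [GPSol.order, GPSol.orderSet, GPSol.leaves]
    have hlX : GPSol.numLeaves (some (GPTree.leaf a)) = 1 := by
      simp [GPSol.numLeaves, GPSol.leaves, GPTree.leafList]
    have hlY : GPSol.numLeaves (none : GPSol n) = 0 := by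
      simp [GPSol.numLeaves, GPSol.leaves]
    omega
end

section
/- Under the SMO-GP-single acceptance rule on MO-WORDER, starting from a non-redundant solution, every solution ever accepted into the population is non-redundant; consequently the complexity of every population member lies in {0, 1, 3, 5, ..., 2n-1} and the population size never exceeds n+1. -/
open Finset

/-- A solution is non-redundant if it is the empty tree or if, expressing `k`
variables, it has complexity exactly `2k - 1`. -/
def NonRedundant {n : ℕ} (X : GPSol n) : Prop :=
  X = none ∨ (GPSol.complexity X : ℤ) = 2 * (GPSol.order X : ℤ) - 1

/-- `Dominates w Y X`: `Y` dominates `X` in the bi-objective problem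
`(WORDER, C)` (`WORDER` maximized, `C` minimized). -/
def Dominates {n : ℕ} (w : Fin n → ℝ) (Y X : GPSol n) : Prop :=
  GPSol.worder w X ≤ GPSol.worder w Y ∧
  GPSol.complexity Y ≤ GPSol.complexity X ∧
  (GPSol.worder w X < GPSol.worder w Y ∨ GPSol.complexity Y < GPSol.complexity X)

namespace Stmt12Aux
variable {n : ℕ}

def SL (L : List (Fin n × Bool)) : Finset (Fin n) :=
  Finset.univ.filter fun i => L.find? (fun p => p.1 == i) = some (i, true)

lemma mem_SL {L : List (Fin n × Bool)} {i : Fin n} :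
    i ∈ SL L ↔ L.find? (fun p => p.1 == i) = some (i, true) := by
  simp [SL]

lemma mem_of_mem_SL {L : List (Fin n × Bool)} {i : Fin n} (h : i ∈ SL L) :
    (i, true) ∈ L := by
  rw [mem_SL] at h
  exact List.mem_of_find?_eq_some h

lemma SL_cons (p : Fin n × Bool) (L : List (Fin n × Bool)) :
    SL (p :: L) = if p.2 = true then insert p.1 (SL L) else (SL L).erase p.1 := by
  ext i
  by_cases h : p.1 = i
  · subst h
    obtain ⟨a, b⟩ := p
    have hf : List.find? (fun q => q.1 == a) ((a, b) :: L) = some (a, b) :=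
      List.find?_cons_of_pos (by simp)
    cases b <;> simp [mem_SL, hf]
  · have hf : List.find? (fun q => q.1 == i) (p :: L) = L.find? (fun q => q.1 == i) :=
      List.find?_cons_of_neg (by simp [h])
    by_cases hb : p.2 = true <;>
      simp [mem_SL, hf, hb, Finset.mem_insert, Finset.mem_erase, Ne.symm h, h]

def Good (L : List (Fin n × Bool)) : Prop :=
  (∀ p ∈ L, p.2 = true) ∧ (L.map Prod.fst).Nodup

lemma SL_of_good {L : List (Fin n × Bool)} (h : Good L) :
    SL L = (L.map Prod.fst).toFinset := by
  induction L with
  | nil => ext i; simp [mem_SL]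
  | cons p L ih =>
    have hp : p.2 = true := h.1 p (by simp)
    have hL : Good L := ⟨fun q hq => h.1 q (by simp [hq]), (List.nodup_cons.mp h.2).2⟩
    rw [SL_cons, if_pos hp, ih hL]
    simp

lemma SL_card (L : List (Fin n × Bool)) :
    (SL L).card ≤ L.length ∧ ((SL L).card = L.length → Good L) := by
  induction L with
  | nil => constructor <;> simp [SL, Good]
  | cons p L ih =>
    rw [SL_cons]
    by_cases hb : p.2 = true
    · rw [if_pos hb]
      have h1 : (insert p.1 (SL L)).card ≤ (SL L).card + 1 := Finset.card_insert_le _ _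
      refine ⟨by simpa using h1.trans (by omega), ?_⟩
      intro h
      simp only [List.length_cons] at h
      by_cases hm : p.1 ∈ SL L
      · rw [Finset.card_insert_of_mem hm] at h; omega
      · rw [Finset.card_insert_of_notMem hm] at h
        have hc : (SL L).card = L.length := by omega
        have hG := ih.2 hc
        have hnm : p.1 ∉ L.map Prod.fst := by
          rw [SL_of_good hG, List.mem_toFinset] at hm; exact hm
        exact ⟨fun q hq => by
          rcases List.mem_cons.mp hq with rfl | hq
          · exact hb
          · exact hG.1 q hq, List.nodup_cons.mpr ⟨hnm, hG.2⟩⟩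
    · rw [if_neg hb]
      have h1 : ((SL L).erase p.1).card ≤ (SL L).card := Finset.card_erase_le
      exact ⟨by simpa using h1.trans (ih.1.trans (by omega)), fun h => by
        simp only [List.length_cons] at h; omega⟩

lemma size_eq (t : GPTree n) : (t.size : ℤ) = 2 * t.leafList.length - 1 := by
  induction t with
  | leaf v => simp [GPTree.size, GPTree.leafList]
  | node l r ihl ihr =>
    simp only [GPTree.size, GPTree.leafList, List.length_append]
    push_cast
    omega


lemma nonred_iff (t : GPTree n) : NonRedundant (some t) ↔ Good t.leafList := by
  have hs := size_eq t
  have horder : GPSol.order (some t) = (SL t.leafList).card := rfl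
  have hcomp : GPSol.complexity (some t) = t.size := rfl
  constructor
  · rintro (h | h)
    · exact absurd h (by simp)
    · refine (SL_card _).2 ?_
      rw [hcomp] at h; rw [horder] at h
      omega
  · intro hg
    right
    rw [hcomp, horder, SL_of_good hg, List.card_toFinset, hg.2.dedup, List.length_map]
    exact hs

lemma sub_shape {t t' : GPTree n} (h : Substitute t t') :
    t'.size = t.size ∧
      ∃ A B a b, t.leafList = A ++ a :: B ∧ t'.leafList = A ++ b :: B := by
  induction h with
  | leaf a b => exact ⟨rfl, [], [], a, b, rfl, rfl⟩
  | @left l l' r h ih =>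
    obtain ⟨hs, A, B, a, b, h1, h2⟩ := ih
    exact ⟨by simp [GPTree.size, hs], A, B ++ r.leafList, a, b,
      by simp [GPTree.leafList, h1], by simp [GPTree.leafList, h2]⟩
  | @right l r r' h ih =>
    obtain ⟨hs, A, B, a, b, h1, h2⟩ := ih
    exact ⟨by simp [GPTree.size, hs], l.leafList ++ A, B, a, b,
      by simp [GPTree.leafList, h1], by simp [GPTree.leafList, h2]⟩

lemma ins_shape {t t' : GPTree n} (h : InsertLeaf t t') :
    t'.size = t.size + 2 ∧
      ∃ A B a, t.leafList = A ++ B ∧ t'.leafList = A ++ a :: B := by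
  induction h with
  | hereL t a => exact ⟨by simp [GPTree.size]; omega, [], t.leafList, a, rfl, rfl⟩
  | hereR t a =>
    exact ⟨by simp [GPTree.size], t.leafList, [], a, by simp, rfl⟩
  | @left l l' r h ih =>
    obtain ⟨hs, A, B, a, h1, h2⟩ := ih
    exact ⟨by simp [GPTree.size, hs]; omega, A, B ++ r.leafList, a,
      by simp [GPTree.leafList, h1], by simp [GPTree.leafList, h2]⟩
  | @right l r r' h ih =>
    obtain ⟨hs, A, B, a, h1, h2⟩ := ih
    exact ⟨by simp [GPTree.size, hs]; omega, l.leafList ++ A, B, a,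
      by simp [GPTree.leafList, h1], by simp [GPTree.leafList, h2]⟩

lemma good_middle_iff (A B : List (Fin n × Bool)) (q : Fin n × Bool) :
    Good (A ++ q :: B) ↔
      Good (A ++ B) ∧ q.2 = true ∧ q.1 ∉ (A ++ B).map Prod.fst := by
  have hperm : List.Perm ((A ++ q :: B).map Prod.fst) (q.1 :: (A ++ B).map Prod.fst) := by
    simp only [List.map_append, List.map_cons]
    exact (List.perm_middle (a := q.1) (l₁ := A.map Prod.fst) (l₂ := B.map Prod.fst))
  constructor
  · rintro ⟨h1, h2⟩
    have h2' := (hperm.nodup_iff).mp h2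
    rw [List.nodup_cons] at h2'
    exact ⟨⟨fun p hp => h1 p (by simp at hp ⊢; tauto), h2'.2⟩,
      h1 q (by simp), h2'.1⟩
  · rintro ⟨⟨h1, h2⟩, h3, h4⟩
    refine ⟨fun p hp => ?_, (hperm.nodup_iff).mpr (List.nodup_cons.mpr ⟨h4, h2⟩)⟩
    rcases (by simpa using hp : p ∈ A ∨ p = q ∨ p ∈ B) with h | rfl | h
    · exact h1 p (by simp [h])
    · exact h3
    · exact h1 p (by simp [h])

lemma SL_subset_toFinset (L : List (Fin n × Bool)) :
    SL L ⊆ (L.map Prod.fst).toFinset := fun i hi => by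
  have := mem_of_mem_SL hi
  simp only [List.mem_toFinset, List.mem_map]
  exact ⟨(i, true), this, rfl⟩

end Stmt12Aux

/-- under the SMO-GP-single acceptance rule on MO-WORDER (positive
weights), an offspring of a non-redundant solution that is not dominated by its
parent is again non-redundant; consequently, in any population of non-redundant
solutions that are pairwise not weakly dominating (as maintained by SMO-GP), each
member has complexity in `{0, 1, 3, 5, ..., 2n-1}` and the population size is at
most `n + 1`. -/
theorem stmt12 {n : ℕ} (w : Fin n → ℝ) (hpos : ∀ i, 0 < w i) :
    (∀ X Y : GPSol n, NonRedundant X → HVLStep X Y →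
      ¬ Dominates w X Y → NonRedundant Y) ∧
    (∀ P : Finset (GPSol n), (∀ X ∈ P, NonRedundant X) →
      (∀ X ∈ P, ∀ Y ∈ P, X ≠ Y →
        ¬ (GPSol.worder w X ≤ GPSol.worder w Y ∧
            GPSol.complexity Y ≤ GPSol.complexity X)) →
      (∀ X ∈ P, GPSol.complexity X = 0 ∨
        ∃ k : ℕ, 1 ≤ k ∧ k ≤ n ∧ GPSol.complexity X = 2 * k - 1) ∧
      P.card ≤ n + 1) := by
  open Stmt12Aux in
  have mem_V : ∀ (A : List (Fin n × Bool)) (k : Fin n) (c : Bool),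
      (k, c) ∈ A → k ∈ (A.map Prod.fst).toFinset := fun A k c h =>
    List.mem_toFinset.mpr (List.mem_map.mpr ⟨(k, c), h, rfl⟩)
  constructor
  · intro X Y hX hstep hdom
    cases hstep with
    | @sub t t' h =>
      obtain ⟨hs, A, B, a, b, h1, h2⟩ := Stmt12Aux.sub_shape h
      have hG : Stmt12Aux.Good t.leafList := (Stmt12Aux.nonred_iff t).mp hX
      rw [h1, Stmt12Aux.good_middle_iff] at hG
      obtain ⟨hGAB, ha2, hanotin⟩ := hG
      by_cases hb : b.2 = true ∧ b.1 ∉ (A ++ B).map Prod.fst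
      · refine (Stmt12Aux.nonred_iff t').mpr ?_
        rw [h2, Stmt12Aux.good_middle_iff]
        exact ⟨hGAB, hb.1, hb.2⟩
      · exfalso; apply hdom
        set V := ((A ++ B).map Prod.fst).toFinset with hV
        have hSX : GPSol.orderSet (some t) = insert a.1 V := by
          show Stmt12Aux.SL t.leafList = _
          rw [h1, Stmt12Aux.SL_of_good
            ((Stmt12Aux.good_middle_iff A B a).mpr ⟨hGAB, ha2, hanotin⟩)]
          ext k
          simp only [hV, List.mem_toFinset, List.mem_map, Finset.mem_insert,
            List.mem_append, List.mem_cons]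
          constructor
          · rintro ⟨p, hp, rfl⟩
            rcases hp with hp | rfl | hp
            exacts [Or.inr ⟨p, Or.inl hp, rfl⟩, Or.inl rfl, Or.inr ⟨p, Or.inr hp, rfl⟩]
          · rintro (rfl | ⟨p, hp, rfl⟩)
            exacts [⟨a, Or.inr (Or.inl rfl), rfl⟩,
              ⟨p, hp.imp id Or.inr, rfl⟩]
        have hSY : GPSol.orderSet (some t') ⊆ V := by
          intro k hk
          have hm := Stmt12Aux.mem_of_mem_SL (L := t'.leafList) (i := k) hk
          rw [h2] at hm
          rcases (by simpa using hm : (k, true) ∈ A ∨ (k, true) = b ∨ (k, true) ∈ B)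
            with hc | hc | hc
          · exact mem_V _ _ _ (List.mem_append_left _ hc)
          · have hb2 : b.2 = true := by rw [← hc]
            have hbin : b.1 ∈ (A ++ B).map Prod.fst := by
              by_contra hcon; exact hb ⟨hb2, hcon⟩
            have : b.1 = k := by rw [← hc]
            rw [← this]
            exact List.mem_toFinset.mpr hbin
          · exact mem_V _ _ _ (List.mem_append_right _ hc)
        have haV : a.1 ∉ V := by simpa [hV] using hanotin
        have hlt : GPSol.worder w (some t') < GPSol.worder w (some t) := by
          unfold GPSol.worder
          rw [hSX, Finset.sum_insert haV]
          have hle : ∑ i ∈ GPSol.orderSet (some t'), w i ≤ ∑ i ∈ V, w i :=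
            Finset.sum_le_sum_of_subset_of_nonneg hSY (fun i _ _ => (hpos i).le)
          have := hpos a.1
          linarith
        exact ⟨hlt.le, by simp [GPSol.complexity, hs], Or.inl hlt⟩
    | @ins t t' h =>
      obtain ⟨hs, A, B, q, h1, h2⟩ := Stmt12Aux.ins_shape h
      have hG : Stmt12Aux.Good t.leafList := (Stmt12Aux.nonred_iff t).mp hX
      rw [h1] at hG
      by_cases hq : q.2 = true ∧ q.1 ∉ (A ++ B).map Prod.fst
      · refine (Stmt12Aux.nonred_iff t').mpr ?_
        rw [h2, Stmt12Aux.good_middle_iff]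
        exact ⟨hG, hq.1, hq.2⟩
      · exfalso; apply hdom
        set V := ((A ++ B).map Prod.fst).toFinset with hV
        have hSX : GPSol.orderSet (some t) = V := by
          show Stmt12Aux.SL t.leafList = _
          rw [h1, Stmt12Aux.SL_of_good hG]
        have hSY : GPSol.orderSet (some t') ⊆ V := by
          intro k hk
          have hm := Stmt12Aux.mem_of_mem_SL (L := t'.leafList) (i := k) hk
          rw [h2] at hm
          rcases (by simpa using hm : (k, true) ∈ A ∨ (k, true) = q ∨ (k, true) ∈ B)
            with hc | hc | hc
          · exact mem_V _ _ _ (List.mem_append_left _ hc)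
          · have hq2 : q.2 = true := by rw [← hc]
            have hqin : q.1 ∈ (A ++ B).map Prod.fst := by
              by_contra hcon; exact hq ⟨hq2, hcon⟩
            have : q.1 = k := by rw [← hc]
            rw [← this]
            exact List.mem_toFinset.mpr hqin
          · exact mem_V _ _ _ (List.mem_append_right _ hc)
        have hle : GPSol.worder w (some t') ≤ GPSol.worder w (some t) := by
          unfold GPSol.worder
          rw [hSX]
          exact Finset.sum_le_sum_of_subset_of_nonneg hSY (fun i _ _ => (hpos i).le)
        exact ⟨hle, by simp [GPSol.complexity, hs], Or.inr (by simp [GPSol.complexity, hs])⟩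
    | insEmpty a =>
      obtain ⟨i, c⟩ := a
      cases c with
      | true =>
        refine (Stmt12Aux.nonred_iff _).mpr ?_
        exact ⟨by simp [GPTree.leafList], by simp [GPTree.leafList]⟩
      | false =>
        exfalso; apply hdom
        have hSY : GPSol.orderSet (some (GPTree.leaf ((i, false) : Fin n × Bool))) = ∅ := by
          show Stmt12Aux.SL (GPTree.leafList _) = ∅
          show Stmt12Aux.SL [(i, false)] = ∅
          rw [Stmt12Aux.SL_cons]
          simp [Stmt12Aux.SL]
        have hSX : GPSol.orderSet (none : GPSol n) = ∅ := by
          ext k; simp [GPSol.orderSet, GPSol.leaves]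
        refine ⟨?_, by simp [GPSol.complexity, GPTree.size], Or.inr (by simp [GPSol.complexity, GPTree.size])⟩
        unfold GPSol.worder
        rw [hSX, hSY]
    | @del t t' h =>
      obtain ⟨hs, A, B, q, h1, h2⟩ := Stmt12Aux.ins_shape h
      have hG : Stmt12Aux.Good t.leafList := (Stmt12Aux.nonred_iff t).mp hX
      rw [h2, Stmt12Aux.good_middle_iff] at hG
      refine (Stmt12Aux.nonred_iff t').mpr ?_
      rw [h1]
      exact hG.1
    | delToEmpty a => exact Or.inl rfl
  · intro P hNR hpair
    have hmem : ∀ X ∈ P, GPSol.complexity X = 0 ∨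
        ∃ k : ℕ, 1 ≤ k ∧ k ≤ n ∧ GPSol.complexity X = 2 * k - 1 := by
      intro X hXP
      rcases hNR X hXP with rfl | h
      · exact Or.inl rfl
      · refine Or.inr ⟨GPSol.order X, ?_, ?_, ?_⟩
        · omega
        · exact (Finset.card_filter_le _ _).trans (by simp)
        · omega
    refine ⟨hmem, ?_⟩
    have hinj : Set.InjOn GPSol.complexity (P : Set (GPSol n)) := by
      intro X hX Y hY hXY
      by_contra hne
      rcases le_total (GPSol.worder w X) (GPSol.worder w Y) with hle | hle
      · exact hpair X hX Y hY hne ⟨hle, le_of_eq hXY.symm⟩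
      · exact hpair Y hY X hX (Ne.symm hne) ⟨hle, le_of_eq hXY⟩
    calc P.card = (P.image GPSol.complexity).card :=
          (Finset.card_image_of_injOn hinj).symm
      _ ≤ (insert 0 ((Finset.range n).image (fun k => 2 * (k + 1) - 1))).card := by
          apply Finset.card_le_card
          intro c hc
          obtain ⟨X, hXP, rfl⟩ := Finset.mem_image.mp hc
          rcases hmem X hXP with h | ⟨k, hk1, hk2, hk3⟩
          · simp [h]
          · refine Finset.mem_insert_of_mem (Finset.mem_image.mpr ⟨k - 1, ?_, ?_⟩)
            · exact Finset.mem_range.mpr (by omega)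
            · omega
      _ ≤ n + 1 := by
          refine (Finset.card_insert_le _ _).trans ?_
          have := Finset.card_image_le (s := Finset.range n) (f := fun k => 2 * (k + 1) - 1)
          simp only [Finset.card_range] at this
          omega
end
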